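/- arXiv:1905.03270 — 2 statements merged into one kernel-verified Lean document; each statement's English description precedes it below -/
import Mathlib

section
/- If G is a subgroup of GL(d,ℂ) and L ∈ G, then the smallest eigenvalue of L L† satisfies λ_min(L L†) ≥ (1/d) · inf over Y ∈ G of tr(Y† Y L L†) / tr(Y† Y). -/
open Matrix MeasureTheory ProbabilityTheory Filter Topology

noncomputable instance matMS {d : ℕ} : MeasurableSpace (Matrix (Fin d) (Fin d) ℂ) :=
  inferInstanceAs (MeasurableSpace (Fin d → Fin d → ℂ))

/-- largest eigenvalue of `L * Lᴴ` -/
noncomputable def lamMax {d : ℕ} (L : Matrix (Fin d) (Fin d) ℂ) : ℝ :=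
  ⨆ i, (Matrix.isHermitian_mul_conjTranspose_self L).eigenvalues i

/-- smallest eigenvalue of `L * Lᴴ` -/
noncomputable def lamMin {d : ℕ} (L : Matrix (Fin d) (Fin d) ℂ) : ℝ :=
  ⨅ i, (Matrix.isHermitian_mul_conjTranspose_self L).eigenvalues i

/-- largest singular value of `L`: square root of the largest eigenvalue of `Lᴴ * L` -/
noncomputable def sigmaMax {d : ℕ} (L : Matrix (Fin d) (Fin d) ℂ) : ℝ :=
  Real.sqrt (⨆ i, (Matrix.isHermitian_conjTranspose_mul_self L).eigenvalues i)

/-- smallest singular value of `L` -/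
noncomputable def sigmaMin {d : ℕ} (L : Matrix (Fin d) (Fin d) ℂ) : ℝ :=
  Real.sqrt (⨅ i, (Matrix.isHermitian_conjTranspose_mul_self L).eigenvalues i)

/-- normalized Gram matrix `Yᴴ Y / tr (Yᴴ Y)` (equal to `0` when the trace vanishes) -/
noncomputable def gram {d : ℕ} (Y : Matrix (Fin d) (Fin d) ℂ) : Matrix (Fin d) (Fin d) ℂ :=
  ((Yᴴ * Y).trace)⁻¹ • (Yᴴ * Y)

lemma trace_conjTranspose_mul_self_re_nonneg {d : ℕ} (M : Matrix (Fin d) (Fin d) ℂ) :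
    0 ≤ ((Mᴴ * M).trace).re := by
  have h : (Mᴴ * M).trace = ∑ j, ∑ i, (starRingEnd ℂ) (M i j) * M i j := by
    simp [Matrix.trace, Matrix.diag, Matrix.mul_apply, Matrix.conjTranspose_apply]
  rw [h]
  rw [Complex.re_sum]
  refine Finset.sum_nonneg fun j _ => ?_
  rw [Complex.re_sum]
  refine Finset.sum_nonneg fun i _ => ?_
  have := Complex.normSq_nonneg (M i j)
  simp [Complex.normSq_apply, Complex.mul_re] at this ⊢
  nlinarith [this]

theorem stmt_2 {d : ℕ} (G : Subgroup (GL (Fin d) ℂ)) (L : GL (Fin d) ℂ) (hL : L ∈ G) :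
    lamMin (L : Matrix (Fin d) (Fin d) ℂ) ≥
      (1 / (d : ℝ)) * ⨅ Y : G, ((((Y : GL (Fin d) ℂ) : Matrix (Fin d) (Fin d) ℂ)ᴴ *
          ((Y : GL (Fin d) ℂ) : Matrix (Fin d) (Fin d) ℂ) *
          ((L : Matrix (Fin d) (Fin d) ℂ) * (L : Matrix (Fin d) (Fin d) ℂ)ᴴ)).trace).re /
        ((((Y : GL (Fin d) ℂ) : Matrix (Fin d) (Fin d) ℂ)ᴴ *
          ((Y : GL (Fin d) ℂ) : Matrix (Fin d) (Fin d) ℂ)).trace).re := by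
  rcases Nat.eq_zero_or_pos d with hd | hd
  · subst hd
    simp [lamMin, ge_iff_le]
  haveI : Nonempty (Fin d) := Fin.pos_iff_nonempty.mp hd
  set Lm : Matrix (Fin d) (Fin d) ℂ := (L : Matrix (Fin d) (Fin d) ℂ) with hLm
  set A : Matrix (Fin d) (Fin d) ℂ := Lm * Lmᴴ with hAdef
  have hA : A.IsHermitian := Matrix.isHermitian_mul_conjTranspose_self Lm
  set μ : Fin d → ℝ := hA.eigenvalues with hμ
  -- the function inside the infimum
  set f : G → ℝ := fun Y => ((((Y : GL (Fin d) ℂ) : Matrix (Fin d) (Fin d) ℂ)ᴴ *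
          ((Y : GL (Fin d) ℂ) : Matrix (Fin d) (Fin d) ℂ) * A).trace).re /
        ((((Y : GL (Fin d) ℂ) : Matrix (Fin d) (Fin d) ℂ)ᴴ *
          ((Y : GL (Fin d) ℂ) : Matrix (Fin d) (Fin d) ℂ)).trace).re with hf
  -- determinants and positivity of eigenvalues
  have hdetL : IsUnit Lm.det := (Matrix.isUnit_iff_isUnit_det Lm).mp L.isUnit
  have hdetA : A.det ≠ 0 := by
    rw [hAdef, Matrix.det_mul, Matrix.det_conjTranspose]
    exact mul_ne_zero hdetL.ne_zero (star_ne_zero.mpr hdetL.ne_zero)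
  have hμpos : ∀ i, 0 < μ i := by
    intro i
    have hnn : 0 ≤ μ i := Matrix.eigenvalues_self_mul_conjTranspose_nonneg Lm i
    rcases hnn.lt_or_eq with h | h
    · exact h
    · exfalso
      apply hdetA
      rw [hA.det_eq_prod_eigenvalues]
      exact Finset.prod_eq_zero (Finset.mem_univ i) (by rw [← hμ, ← h]; simp)
  -- minimum eigenvalue attained
  obtain ⟨i₀, -, hi₀⟩ := Finset.exists_min_image Finset.univ μ ⟨Classical.arbitrary _, Finset.mem_univ _⟩
  have hi₀' : ∀ j, μ i₀ ≤ μ j := fun j => hi₀ j (Finset.mem_univ j)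
  have hlam : μ i₀ ≤ lamMin Lm := le_ciInf hi₀'
  -- bounded below
  have hbdd : BddBelow (Set.range f) := by
    refine ⟨0, ?_⟩
    rintro x ⟨Y, rfl⟩
    set Ym : Matrix (Fin d) (Fin d) ℂ := ((Y : GL (Fin d) ℂ) : Matrix (Fin d) (Fin d) ℂ)
    have hnum : 0 ≤ ((Ymᴴ * Ym * A).trace).re := by
      have h2 : Ymᴴ * Ym * A = (Ymᴴ * (Ym * Lm)) * Lmᴴ := by
        rw [hAdef]; noncomm_ring
      have : (Ymᴴ * Ym * A).trace = ((Ym * Lm)ᴴ * (Ym * Lm)).trace := by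
        rw [h2, Matrix.trace_mul_comm, Matrix.conjTranspose_mul]
        congr 1
        noncomm_ring
      rw [this]
      exact trace_conjTranspose_mul_self_re_nonneg _
    exact div_nonneg hnum (trace_conjTranspose_mul_self_re_nonneg _)
  -- value at Y = L⁻¹
  set Yinv : G := ⟨L⁻¹, G.inv_mem hL⟩ with hYinv
  have hYm : ((((Yinv : G) : GL (Fin d) ℂ)) : Matrix (Fin d) (Fin d) ℂ) = Lm⁻¹ := by
    rw [hYinv]
    exact Matrix.coe_units_inv L
  have hgram : Lm⁻¹ᴴ * Lm⁻¹ = A⁻¹ := by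
    rw [Matrix.conjTranspose_nonsing_inv, hAdef, Matrix.mul_inv_rev]
  -- A⁻¹ via spectral theorem
  set U : Matrix (Fin d) (Fin d) ℂ := (hA.eigenvectorUnitary : Matrix (Fin d) (Fin d) ℂ) with hU
  have hUU : star U * U = 1 := (Matrix.mem_unitaryGroup_iff').mp hA.eigenvectorUnitary.2
  have hUU' : U * star U = 1 := (Matrix.mem_unitaryGroup_iff).mp hA.eigenvectorUnitary.2
  set D' : Matrix (Fin d) (Fin d) ℂ := Matrix.diagonal (fun i => ((μ i)⁻¹ : ℂ)) with hD'
  have hspec : A = U * Matrix.diagonal (fun i => ((μ i : ℝ) : ℂ)) * star U := by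
    rw [hU, hμ]; exact hA.spectral_theorem
  have hAinv : A⁻¹ = U * D' * star U := by
    apply Matrix.inv_eq_right_inv
    calc A * (U * D' * star U)
        = (U * Matrix.diagonal (fun i => ((μ i : ℝ) : ℂ)) * star U) * (U * D' * star U) := by
          rw [← hspec]
      _ = U * (Matrix.diagonal (fun i => ((μ i : ℝ) : ℂ)) * (star U * U) * D') * star U := by
          noncomm_ring
      _ = U * (Matrix.diagonal (fun i => ((μ i : ℝ) : ℂ)) * D') * star U := by rw [hUU]; noncomm_ring
      _ = U * star U := by
          congr 1
          rw [hD', Matrix.diagonal_mul_diagonal]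
          have : (fun i => ((μ i : ℝ) : ℂ) * ((μ i)⁻¹ : ℂ)) = fun _ => (1 : ℂ) := by
            funext i
            simp only [← Complex.ofReal_inv, ← Complex.ofReal_mul,
              mul_inv_cancel₀ (hμpos i).ne']
            simp
          rw [this, Matrix.diagonal_one, mul_one]
      _ = 1 := hUU'
  have htrAinv : (A⁻¹).trace = ∑ i, ((μ i)⁻¹ : ℂ) := by
    rw [hAinv, Matrix.trace_mul_cycle, hUU, one_mul, hD', Matrix.trace_diagonal]
  have htrAinv_re : ((A⁻¹).trace).re = ∑ i, (μ i)⁻¹ := by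
    rw [htrAinv]
    push_cast
    simp
  -- compute f Yinv
  have hfY : f Yinv = (d : ℝ) / ∑ i, (μ i)⁻¹ := by
    rw [hf]
    simp only
    rw [hYm, hgram]
    have h1 : A⁻¹ * A = 1 := Matrix.nonsing_inv_mul A hdetA.isUnit
    rw [h1, Matrix.trace_one, htrAinv_re]
    simp
  -- sum of inverses bound
  have hsumpos : (0:ℝ) < ∑ i, (μ i)⁻¹ :=
    Finset.sum_pos (fun i _ => inv_pos.mpr (hμpos i)) Finset.univ_nonempty
  have hsum_ge : (μ i₀)⁻¹ ≤ ∑ i, (μ i)⁻¹ :=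
    Finset.single_le_sum (fun i _ => (inv_pos.mpr (hμpos i)).le) (Finset.mem_univ i₀)
  have hkey : f Yinv ≤ (d : ℝ) * μ i₀ := by
    rw [hfY]
    rw [div_le_iff₀ hsumpos]
    calc (d:ℝ) = (d:ℝ) * μ i₀ * (μ i₀)⁻¹ := by
          rw [mul_inv_cancel_right₀ (hμpos i₀).ne']
      _ ≤ (d:ℝ) * μ i₀ * ∑ i, (μ i)⁻¹ := by
          apply mul_le_mul_of_nonneg_left hsum_ge
          exact mul_nonneg (Nat.cast_nonneg d) (hμpos i₀).le
  have hinf : (⨅ Y : G, f Y) ≤ f Yinv := ciInf_le hbdd Yinv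
  have hd' : (0:ℝ) < d := by exact_mod_cast hd
  calc (1 / (d : ℝ)) * ⨅ Y : G, f Y
      ≤ (1 / (d : ℝ)) * ((d:ℝ) * μ i₀) := by
        apply mul_le_mul_of_nonneg_left (hinf.trans hkey)
        positivity
    _ = μ i₀ := by field_simp
    _ ≤ lamMin Lm := hlam
end

section
/- Let (Lᵢ) be i.i.d. uniform over the two matrices A = [[1,0],[0,0]] and B = (1/2)[[1,1],[1,1]]. Then the maximal Lyapunov exponent is γ₁ = −(1/4) log 2, i.e., lim_{n→∞} (1/n) E[log σ_max(L₁⋯Lₙ)] = −(1/4) log 2. -/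
open Matrix MeasureTheory ProbabilityTheory Filter Topology

noncomputable instance matMSR {d : ℕ} : MeasurableSpace (Matrix (Fin d) (Fin d) ℝ) :=
  inferInstanceAs (MeasurableSpace (Fin d → Fin d → ℝ))

/-- largest singular value of a real matrix -/
noncomputable def sigmaMaxR {d : ℕ} (L : Matrix (Fin d) (Fin d) ℝ) : ℝ :=
  Real.sqrt (⨆ i, (Matrix.isHermitian_conjTranspose_mul_self L).eigenvalues i)

noncomputable def uvec : Bool → (Fin 2 → ℝ)
  | false => ![1, 0]
  | true => ![(Real.sqrt 2)⁻¹, (Real.sqrt 2)⁻¹]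

noncomputable def Pmat (b : Bool) : Matrix (Fin 2) (Fin 2) ℝ := vecMulVec (uvec b) (uvec b)

lemma sqrt2_inv_sq : (Real.sqrt 2)⁻¹ * (Real.sqrt 2)⁻¹ = 2⁻¹ := by
  rw [← mul_inv]
  norm_num [Real.mul_self_sqrt]

lemma udot (a b : Bool) : uvec a ⬝ᵥ uvec b = if a = b then 1 else (Real.sqrt 2)⁻¹ := by
  have h2 : (0:ℝ) < Real.sqrt 2 := Real.sqrt_pos.mpr (by norm_num)
  cases a <;> cases b <;>
    simp [uvec, dotProduct, Fin.sum_univ_two, sqrt2_inv_sq] <;>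
    rw [← two_mul] <;> field_simp <;>
    rw [eq_comm, Real.sqrt_eq_iff] <;> norm_num

lemma vecMulVec_mul_vecMulVec {n : Type*} [Fintype n] (a b c d : n → ℝ) :
    vecMulVec a b * vecMulVec c d = (b ⬝ᵥ c) • vecMulVec a d := by
  ext i j
  simp [vecMulVec_apply, mul_apply, dotProduct, Finset.mul_sum, Finset.sum_mul]
  congr 1; ext k; ring

lemma Pmat_false : Pmat false = !![1, 0; 0, 0] := by
  ext i j; fin_cases i <;> fin_cases j <;> simp [Pmat, uvec, vecMulVec_apply]

lemma Pmat_true : Pmat true = (1/2 : ℝ) • !![1, 1; 1, 1] := by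
  ext i j; fin_cases i <;> fin_cases j <;>
    simp [Pmat, uvec, vecMulVec_apply, sqrt2_inv_sq] <;> norm_num

-- the product formula
lemma prod_Pmat (b : ℕ → Bool) : ∀ n : ℕ,
    (List.ofFn fun i : Fin (n+1) => Pmat (b i)).prod =
      (∏ i ∈ Finset.range n, (uvec (b i) ⬝ᵥ uvec (b (i+1)))) •
        vecMulVec (uvec (b 0)) (uvec (b n)) := by
  intro n
  induction n with
  | zero => simp [Pmat]
  | succ n ih =>
      rw [List.ofFn_succ']
      simp only [List.prod_concat, ih, Fin.coe_castSucc, Fin.val_last]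
      rw [smul_mul_assoc, Pmat, _root_.vecMulVec_mul_vecMulVec, smul_smul, Finset.prod_range_succ]

lemma trace_eq_sum_eig {n : Type*} [Fintype n] [DecidableEq n] {A : Matrix n n ℝ}
    (hA : A.IsHermitian) : A.trace = ∑ i, hA.eigenvalues i := by
  conv_lhs => rw [hA.spectral_theorem]
  rw [Unitary.conjStarAlgAut_apply, Matrix.trace_mul_cycle, Unitary.coe_star_mul_self, one_mul, trace_diagonal]
  simp

lemma isup_fin2 (f : Fin 2 → ℝ) : (⨆ i, f i) = max (f 0) (f 1) := by
  apply le_antisymm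
  · apply ciSup_le; intro i; fin_cases i
    · exact le_max_left _ _
    · exact le_max_right _ _
  · apply max_le <;> exact le_ciSup (Set.Finite.bddAbove (Set.finite_range f)) _

lemma sup_eig_of_trace_det {A : Matrix (Fin 2) (Fin 2) ℝ} (hA : A.IsHermitian)
    {c : ℝ} (hc : 0 ≤ c) (htr : A.trace = c) (hdet : A.det = 0) :
    (⨆ i, hA.eigenvalues i) = c := by
  have hs : hA.eigenvalues 0 + hA.eigenvalues 1 = c := by
    rw [← htr, trace_eq_sum_eig hA, Fin.sum_univ_two]
  have hp : hA.eigenvalues 0 * hA.eigenvalues 1 = 0 := by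
    have := hA.det_eq_prod_eigenvalues
    rw [hdet, Fin.prod_univ_two] at this
    exact_mod_cast this.symm
  rw [isup_fin2]
  rcases mul_eq_zero.mp hp with h | h
  · rw [h] at hs ⊢; rw [zero_add] at hs; rw [hs, max_eq_right hc]
  · rw [h] at hs ⊢; rw [add_zero] at hs; rw [hs, max_eq_left hc]

lemma sigmaMaxR_smul_vecMulVec (a b : Bool) {c : ℝ} (hc : 0 ≤ c) :
    sigmaMaxR (c • vecMulVec (uvec a) (uvec b)) = c := by
  set M := c • vecMulVec (uvec a) (uvec b) with hM
  have hMt : Mᵀ * M = (c * c) • vecMulVec (uvec b) (uvec b) := by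
    have hT : (vecMulVec (uvec a) (uvec b))ᵀ = vecMulVec (uvec b) (uvec a) := by
      ext i j; simp [vecMulVec_apply, transpose_apply, mul_comm]
    rw [hM, transpose_smul, hT, smul_mul_smul_comm,
      _root_.vecMulVec_mul_vecMulVec, udot, if_pos rfl, one_smul]
  have htr : (Mᵀ * M).trace = c * c := by
    rw [hMt, trace_smul]
    have : (vecMulVec (uvec b) (uvec b)).trace = 1 := by
      cases b <;> simp [trace_fin_two, vecMulVec_apply, uvec, sqrt2_inv_sq] <;> norm_num
    rw [this]; simp
  have hdet : (Mᵀ * M).det = 0 := by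
    rw [hMt]
    cases b <;>
      simp [det_fin_two, vecMulVec_apply, uvec] <;> ring
  rw [sigmaMaxR, sup_eig_of_trace_det (Matrix.isHermitian_conjTranspose_mul_self M) (mul_self_nonneg c) htr hdet,
    Real.sqrt_mul_self hc]

lemma Pmat_ne : Pmat false ≠ Pmat true := by
  rw [Pmat_false, Pmat_true]
  intro h
  have := congrFun (congrFun h 0) 0
  norm_num [Matrix.smul_apply] at this

lemma log_sigma_prod (M : ℕ → Matrix (Fin 2) (Fin 2) ℝ)
    (hM : ∀ i, M i = Pmat false ∨ M i = Pmat true) (n : ℕ) :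
    Real.log (sigmaMaxR ((List.ofFn fun i : Fin (n+1) => M i).prod)) =
      ∑ i ∈ Finset.range n, (if M i = M (i+1) then 0 else -(Real.log 2 / 2)) := by
  classical
  set b : ℕ → Bool := fun i => if M i = Pmat false then false else true with hb
  have hMb : ∀ i, M i = Pmat (b i) := by
    intro i
    rcases hM i with h | h
    · simp [hb, h]
    · have : ¬ (M i = Pmat false) := by rw [h]; exact (Pmat_ne).symm
      simp only [hb, if_neg this, h]
  have hiff : ∀ i j, (M i = M j) ↔ (b i = b j) := by
    intro i j
    rw [hMb i, hMb j]
    constructor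
    · intro h
      by_contra hne
      cases hbi : b i <;> cases hbj : b j <;> rw [hbi, hbj] at h hne <;>
        first
          | exact hne rfl
          | exact Pmat_ne h
          | exact Pmat_ne h.symm
    · intro h; rw [h]
  have hprod : (List.ofFn fun i : Fin (n+1) => M i).prod =
      (∏ i ∈ Finset.range n, (uvec (b i) ⬝ᵥ uvec (b (i+1)))) •
        vecMulVec (uvec (b 0)) (uvec (b n)) := by
    rw [show (List.ofFn fun i : Fin (n+1) => M i) =
        (List.ofFn fun i : Fin (n+1) => Pmat (b i)) by
      congr 1; funext i; exact hMb i]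
    exact prod_Pmat b n
  have hpos : ∀ i ∈ Finset.range n, (0:ℝ) < uvec (b i) ⬝ᵥ uvec (b (i+1)) := by
    intro i _
    rw [udot]
    split
    · norm_num
    · exact inv_pos.mpr (Real.sqrt_pos.mpr (by norm_num))
  have hc : (0:ℝ) ≤ ∏ i ∈ Finset.range n, (uvec (b i) ⬝ᵥ uvec (b (i+1))) :=
    le_of_lt (Finset.prod_pos hpos)
  rw [hprod, sigmaMaxR_smul_vecMulVec _ _ hc,
    Real.log_prod (fun i hi => ne_of_gt (hpos i hi))]
  apply Finset.sum_congr rfl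
  intro i _
  rw [udot]
  by_cases h : b i = b (i+1)
  · rw [if_pos h, if_pos ((hiff _ _).mpr h), Real.log_one]
  · rw [if_neg h, if_neg (fun hm => h ((hiff _ _).mp hm)), Real.log_inv,
      Real.log_sqrt (by norm_num)]

lemma enn_half_mul : (1/2 : ENNReal) * (1/2) = 1/4 := by
  simp only [one_div]
  rw [show (4:ENNReal) = 2*2 by norm_num,
    ENNReal.mul_inv (Or.inl (by norm_num)) (Or.inl (by norm_num))]

lemma enn_quarter_add : (1/4 : ENNReal) + 1/4 = 1/2 := by
  simp only [one_div]
  rw [← two_mul, show (4:ENNReal) = 2*2 by norm_num,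
    ENNReal.mul_inv (Or.inl (by norm_num)) (Or.inl (by norm_num)), ← mul_assoc,
    ENNReal.mul_inv_cancel (by norm_num) (by norm_num), one_mul]

instance matSingleton {d : ℕ} : MeasurableSingletonClass (Matrix (Fin d) (Fin d) ℝ) :=
  inferInstanceAs (MeasurableSingletonClass (Fin d → Fin d → ℝ))

theorem stmt_16 {Ω : Type*} [MeasurableSpace Ω] (μ : Measure Ω) [IsProbabilityMeasure μ]
    (L : ℕ → Ω → Matrix (Fin 2) (Fin 2) ℝ)
    (hmeas : ∀ i, Measurable (L i))
    (hindep : iIndepFun L μ)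
    (hdist : ∀ i, Measure.map (L i) μ =
      (1 / 2 : ENNReal) • Measure.dirac (!![1, 0; 0, 0] : Matrix (Fin 2) (Fin 2) ℝ) +
      (1 / 2 : ENNReal) • Measure.dirac ((1 / 2 : ℝ) • !![1, 1; 1, 1] : Matrix (Fin 2) (Fin 2) ℝ)) :
    Tendsto (fun n : ℕ =>
        (1 / (n : ℝ)) * ∫ ω, Real.log (sigmaMaxR ((List.ofFn fun i : Fin n => L i ω).prod)) ∂μ)
      atTop (𝓝 (-(1 / 4) * Real.log 2)) := by
  classical
  set Am : Matrix (Fin 2) (Fin 2) ℝ := !![1, 0; 0, 0] with hAm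
  set Bm : Matrix (Fin 2) (Fin 2) ℝ := (1 / 2 : ℝ) • !![1, 1; 1, 1] with hBm
  have hPA : Am = Pmat false := by rw [Pmat_false]
  have hPB : Bm = Pmat true := by rw [Pmat_true]
  have hABne : Am ≠ Bm := by rw [hPA, hPB]; exact Pmat_ne
  -- single marginals
  have hmA : ∀ i, μ (L i ⁻¹' {Am}) = 1/2 := by
    intro i
    rw [← Measure.map_apply (hmeas i) (measurableSet_singleton _), hdist i]
    rw [Measure.add_apply, Measure.smul_apply, Measure.smul_apply,
      Measure.dirac_apply_of_mem (Set.mem_singleton Am),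
      Measure.dirac_apply' _ (measurableSet_singleton _)]
    rw [Set.indicator_of_notMem (by simpa using (Ne.symm hABne))]
    simp
  have hmB : ∀ i, μ (L i ⁻¹' {Bm}) = 1/2 := by
    intro i
    rw [← Measure.map_apply (hmeas i) (measurableSet_singleton _), hdist i]
    rw [Measure.add_apply, Measure.smul_apply, Measure.smul_apply,
      Measure.dirac_apply' _ (measurableSet_singleton _),
      Measure.dirac_apply_of_mem (Set.mem_singleton Bm)]
    rw [Set.indicator_of_notMem (fun h => hABne (Set.mem_singleton_iff.mp h))]
    simp
  -- a.s. each L i takes values in {Am, Bm}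
  have hae : ∀ᵐ ω ∂μ, ∀ i, L i ω = Am ∨ L i ω = Bm := by
    rw [ae_all_iff]
    intro i
    have hms : MeasurableSet ({Am, Bm} : Set (Matrix (Fin 2) (Fin 2) ℝ)) :=
      (measurableSet_singleton Bm).insert Am
    have hnull : μ (L i ⁻¹' ({Am, Bm} : Set _)ᶜ) = 0 := by
      rw [← Measure.map_apply (hmeas i) hms.compl, hdist i]
      rw [Measure.add_apply, Measure.smul_apply, Measure.smul_apply,
        Measure.dirac_apply' _ hms.compl, Measure.dirac_apply' _ hms.compl]
      rw [Set.indicator_of_notMem (by simp), Set.indicator_of_notMem (by simp)]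
      simp
    refine measure_mono_null ?_ hnull
    intro ω hω
    simpa [Set.mem_insert_iff] using hω
  -- the "difference" events
  set Dset : ℕ → Set Ω := fun i =>
    (L i ⁻¹' {Am} ∩ L (i+1) ⁻¹' {Bm}) ∪ (L i ⁻¹' {Bm} ∩ L (i+1) ⁻¹' {Am}) with hDset
  have hDmeas : ∀ i, MeasurableSet (Dset i) := by
    intro i
    exact (((hmeas i) (measurableSet_singleton _)).inter
        ((hmeas (i+1)) (measurableSet_singleton _))).union
      (((hmeas i) (measurableSet_singleton _)).inter
        ((hmeas (i+1)) (measurableSet_singleton _)))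
  have hDval : ∀ i, μ (Dset i) = 1/2 := by
    intro i
    have hind : IndepFun (L i) (L (i+1)) μ := hindep.indepFun (by omega)
    have h1 : μ (L i ⁻¹' {Am} ∩ L (i+1) ⁻¹' {Bm}) = 1/4 := by
      rw [hind.measure_inter_preimage_eq_mul _ _ (measurableSet_singleton _)
        (measurableSet_singleton _), hmA, hmB]
      exact enn_half_mul
    have h2 : μ (L i ⁻¹' {Bm} ∩ L (i+1) ⁻¹' {Am}) = 1/4 := by
      rw [hind.measure_inter_preimage_eq_mul _ _ (measurableSet_singleton _)
        (measurableSet_singleton _), hmA, hmB]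
      rw [mul_comm]
      exact enn_half_mul
    have hdisj : Disjoint (L i ⁻¹' {Am} ∩ L (i+1) ⁻¹' {Bm})
        (L i ⁻¹' {Bm} ∩ L (i+1) ⁻¹' {Am}) := by
      rw [Set.disjoint_left]
      rintro ω ⟨h1', _⟩ ⟨h2', _⟩
      exact hABne ((Set.mem_preimage.mp h1' : L i ω = Am).symm.trans
        (Set.mem_preimage.mp h2' : L i ω = Bm))
    rw [hDset]
    rw [measure_union hdisj (((hmeas i) (measurableSet_singleton _)).inter
        ((hmeas (i+1)) (measurableSet_singleton _))), h1, h2]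
    exact enn_quarter_add
  -- integral formula
  have hint : ∀ m : ℕ,
      (∫ ω, Real.log (sigmaMaxR ((List.ofFn fun i : Fin (m+1) => L i ω).prod)) ∂μ)
        = (m : ℝ) * (-(Real.log 2 / 4)) := by
    intro m
    have hcong : (fun ω => Real.log (sigmaMaxR ((List.ofFn fun i : Fin (m+1) => L i ω).prod)))
        =ᵐ[μ] fun ω => ∑ i ∈ Finset.range m,
          Set.indicator (Dset i) (fun _ => -(Real.log 2 / 2)) ω := by
      filter_upwards [hae] with ω hω
      rw [log_sigma_prod (fun i => L i ω) (fun i => by rw [← hPA, ← hPB]; exact hω i) m]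
      apply Finset.sum_congr rfl
      intro i _
      by_cases h : L i ω = L (i+1) ω
      · rw [if_pos h, Set.indicator_of_notMem]
        intro hmem
        simp only [hDset, Set.mem_union, Set.mem_inter_iff, Set.mem_preimage,
          Set.mem_singleton_iff] at hmem
        rcases hmem with ⟨h1, h2⟩ | ⟨h1, h2⟩
        · exact hABne (by rw [← h1, h]; exact h2)
        · exact hABne (by rw [← h2, ← h]; exact h1)
      · rw [if_neg h, Set.indicator_of_mem]
        simp only [hDset, Set.mem_union, Set.mem_inter_iff, Set.mem_preimage,
          Set.mem_singleton_iff]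
        rcases hω i with h1 | h1 <;> rcases hω (i+1) with h2 | h2
        · exact absurd (h1.trans h2.symm) h
        · exact Or.inl ⟨h1, h2⟩
        · exact Or.inr ⟨h1, h2⟩
        · exact absurd (h1.trans h2.symm) h
    rw [integral_congr_ae hcong,
      integral_finset_sum _ (fun i _ => ((integrable_const _).indicator (hDmeas i)))]
    have hterm : ∀ i ∈ Finset.range m,
        (∫ ω, Set.indicator (Dset i) (fun _ => -(Real.log 2 / 2)) ω ∂μ)
          = -(Real.log 2 / 4) := by
      intro i _
      rw [integral_indicator_const _ (hDmeas i), measureReal_def, hDval i,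
        show ((1:ENNReal)/2).toReal = (1/2 : ℝ) by simp, smul_eq_mul]
      ring
    rw [Finset.sum_congr rfl hterm, Finset.sum_const, Finset.card_range, nsmul_eq_mul]
  -- the limit
  have hg : Tendsto (fun n : ℕ => (1 - 1/(n:ℝ)) * (-(1/4) * Real.log 2)) atTop
      (𝓝 (-(1/4) * Real.log 2)) := by
    have h1 : Tendsto (fun n : ℕ => 1 - 1/(n:ℝ)) atTop (𝓝 1) := by
      simpa using (tendsto_const_nhds (x := (1:ℝ))).sub tendsto_one_div_atTop_nhds_zero_nat
    simpa using h1.mul_const (-(1/4) * Real.log 2)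
  refine hg.congr' ?_
  filter_upwards [eventually_ge_atTop 1] with n hn
  obtain ⟨m, rfl⟩ : ∃ m, n = m + 1 := ⟨n - 1, by omega⟩
  rw [hint m]
  have hnn : ((m:ℝ)+1) ≠ 0 := by positivity
  push_cast
  field_simp
  ring
end
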